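/- Let X be a compact Hausdorff space. Then X is Corson compact if and only if there exist a cardinal κ and a family (a_α)_{α<κ} of elements of C(X, ℂ) such that: (1) 0 ≤ a_α ≤ 1 for every α (in the canonical order on self-adjoint elements); (2) for every character φ of C(X, ℂ) (unital star-algebra homomorphism C(X, ℂ) → ℂ) the set {α < κ : φ(a_α) ≠ 0} is countable; (3) the smallest closed star-subalgebra of C(X, ℂ) containing 1 and all a_α is C(X, ℂ) itself. -/

import Mathlib

open scoped ComplexOrder

/-- A topological space is Corson compact if it is compact Hausdorff and embeds into some
Tychonoff cube `[0,1]^ι` in such a way that every point has countable support. -/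
def IsCorsonCompact (X : Type u) [TopologicalSpace X] : Prop :=
  CompactSpace X ∧ T2Space X ∧
    ∃ (ι : Type u) (e : X → (ι → Set.Icc (0:ℝ) 1)), Topology.IsEmbedding e ∧
      ∀ x : X, {ξ : ι | (e x ξ : ℝ) ≠ 0}.Countable

/-- A compact Hausdorff space `X` is Corson compact iff there is a family `(a i)` in
`C(X, ℂ)` with `0 ≤ a i ≤ 1`, such that every character of `C(X, ℂ)` vanishes on all but
countably many `a i`, and such that `1` together with the `a i` generates `C(X, ℂ)` as a
closed star-subalgebra. -/
theorem stmt_4 (X : Type u) [TopologicalSpace X] [CompactSpace X] [T2Space X] :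
    IsCorsonCompact X ↔
      ∃ (ι : Type u) (a : ι → C(X, ℂ)),
        (∀ i, 0 ≤ a i ∧ a i ≤ 1) ∧
        (∀ φ : C(X, ℂ) →⋆ₐ[ℂ] ℂ, {i : ι | φ (a i) ≠ 0}.Countable) ∧
        (StarAlgebra.adjoin ℂ (Set.range a)).topologicalClosure = ⊤ := by
  constructor
  · rintro ⟨-, -, ι, e, he, hcount⟩
    have hc : Continuous e := he.continuous
    set a : ι → C(X, ℂ) := fun i =>
      ⟨fun x => ((e x i : ℝ) : ℂ),
        Complex.continuous_ofReal.comp (continuous_subtype_val.comp ((continuous_apply i).comp hc))⟩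
      with ha
    refine ⟨ι, a, fun i => ⟨?_, ?_⟩, ?_, ?_⟩
    · rw [ContinuousMap.le_def]
      intro x
      simpa [ha] using Complex.zero_le_real.mpr (e x i).2.1
    · rw [ContinuousMap.le_def]
      intro x
      have := Complex.real_le_real.mpr (e x i).2.2
      simpa [ha] using this
    · intro φ
      -- φ is evaluation at some point
      obtain ⟨x, hx⟩ : ∃ x : X, ∀ f : C(X, ℂ), φ f = f x := by
        let χ := WeakDual.CharacterSpace.equivAlgHom.symm φ.toAlgHom
        refine ⟨(WeakDual.CharacterSpace.homeoEval X ℂ).symm χ, fun f => ?_⟩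
        have h1 : φ f = χ f := by
          rw [WeakDual.CharacterSpace.equivAlgHom_symm_coe]; rfl
        rw [h1]
        have h2 := (WeakDual.CharacterSpace.homeoEval X ℂ).apply_symm_apply χ
        conv_lhs => rw [← h2]
        exact WeakDual.CharacterSpace.continuousMapEval_apply_apply _ _ _ _
      have hset : {i : ι | φ (a i) ≠ 0} = {ξ : ι | (e x ξ : ℝ) ≠ 0} := by
        ext i
        simp only [Set.mem_setOf_eq]
        rw [hx (a i)]
        simp [ha, Complex.ofReal_eq_zero]
      rw [hset]
      exact hcount x
    · apply ContinuousMap.starSubalgebra_topologicalClosure_eq_top_of_separatesPoints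
      intro x y hxy
      have hxy' : e x ≠ e y := fun h => hxy (he.injective h)
      obtain ⟨i, hi⟩ := Function.ne_iff.mp hxy'
      refine ⟨⇑(a i), ⟨a i, StarAlgebra.subset_adjoin ℂ _ ⟨i, rfl⟩, rfl⟩, ?_⟩
      simp only [ha, ContinuousMap.coe_mk]
      exact fun h => hi (Subtype.ext (Complex.ofReal_injective h))
  · rintro ⟨ι, a, hbound, hcount, hgen⟩
    have him : ∀ i (x : X), (a i x).im = 0 ∧ 0 ≤ (a i x).re ∧ (a i x).re ≤ 1 := by
      intro i x
      have h0 : (0 : C(X, ℂ)) x ≤ a i x := ContinuousMap.le_def.mp (hbound i).1 x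
      have h1 : a i x ≤ (1 : C(X, ℂ)) x := ContinuousMap.le_def.mp (hbound i).2 x
      simp only [ContinuousMap.zero_apply, ContinuousMap.one_apply] at h0 h1
      rw [Complex.le_def] at h0 h1
      exact ⟨h0.2.symm, by simpa using h0.1, by simpa using h1.1⟩
    set e : X → ι → Set.Icc (0:ℝ) 1 := fun x i => ⟨(a i x).re, (him i x).2.1, (him i x).2.2⟩
      with hedef
    have hc : Continuous e :=
      continuous_pi fun i => Continuous.subtype_mk (Complex.continuous_re.comp (a i).continuous) _
    have hinj : Function.Injective e := by
      intro x y h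
      have hval : ∀ i, a i x = a i y := by
        intro i
        have := congrArg Subtype.val (congrFun h i)
        exact Complex.ext this (by rw [(him i x).1, (him i y).1])
      by_contra hxy
      -- every element of C(X, ℂ) agrees at x and y
      have key : ∀ f : C(X, ℂ), f x = f y := by
        intro f
        have hle : (StarAlgebra.adjoin ℂ (Set.range a)).topologicalClosure ≤
            StarAlgHom.equalizer (ContinuousMap.evalStarAlgHom ℂ ℂ x)
              (ContinuousMap.evalStarAlgHom ℂ ℂ y) := by
          apply StarSubalgebra.topologicalClosure_minimal
          · apply StarAlgHom.adjoin_le_equalizer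
            rintro g ⟨i, rfl⟩
            exact hval i
          · exact isClosed_eq (continuous_eval_const x)
              (continuous_eval_const y)
        rw [hgen] at hle
        exact hle (StarSubalgebra.mem_top (x := f))
      obtain ⟨g, hg0, hg1, -⟩ := exists_continuous_zero_one_of_isClosed
        (isClosed_singleton (x := x)) (isClosed_singleton (x := y))
        (Set.disjoint_singleton.mpr hxy)
      have := key ⟨fun z => ((g z : ℝ) : ℂ), Complex.continuous_ofReal.comp g.continuous⟩
      simp only [ContinuousMap.coe_mk] at this
      rw [hg0 rfl, hg1 rfl] at this
      simpa using this
    refine ⟨‹CompactSpace X›, ‹T2Space X›, ι, e, (hc.isClosedEmbedding hinj).isEmbedding, ?_⟩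
    intro x
    have hset : {ξ : ι | (e x ξ : ℝ) ≠ 0} = {i : ι | (ContinuousMap.evalStarAlgHom ℂ ℂ x) (a i) ≠ 0} := by
      ext i
      simp only [hedef, Set.mem_setOf_eq, ContinuousMap.evalStarAlgHom_apply]
      constructor
      · intro hre hz
        exact hre (by rw [hz]; simp)
      · intro hz hre
        exact hz (Complex.ext hre (him i x).1)
    rw [hset]
    exact hcount _
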